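/- arXiv:2303.06086 — 4 statements merged into one kernel-verified Lean document; each statement's English description precedes it below -/
import Mathlib

section
/- Let X ⊆ ℝⁿ be a nonempty closed set, a ∈ ℝⁿ, and m(x) the set of closest points of X to x. Then the upper preimage m_*(m(a)) := {x ∈ ℝⁿ : m(a) ⊆ m(x)} is a closed subset of ℝⁿ. -/
/-- the upper preimage `m_*(m(a))` is closed. -/
theorem stmt_11 (n : ℕ) (X : Set (EuclideanSpace ℝ (Fin n)))
    (hXne : X.Nonempty) (hXcl : IsClosed X)
    (m : EuclideanSpace ℝ (Fin n) → Set (EuclideanSpace ℝ (Fin n)))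
    (hm : ∀ x, m x = {y ∈ X | dist y x = Metric.infDist x X})
    (a : EuclideanSpace ℝ (Fin n)) :
    IsClosed {x : EuclideanSpace ℝ (Fin n) | m a ⊆ m x} := by
  have hset : {x : EuclideanSpace ℝ (Fin n) | m a ⊆ m x}
      = ⋂ y ∈ m a, {x | dist y x = Metric.infDist x X} := by
    ext x
    simp only [Set.mem_setOf_eq, Set.mem_iInter]
    constructor
    · intro h y hy
      have := h hy
      rw [hm] at this
      exact this.2
    · intro h y hy
      have hyX : y ∈ X := by rw [hm] at hy; exact hy.1
      rw [hm]
      exact ⟨hyX, h y hy⟩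
  rw [hset]
  exact isClosed_biInter fun y _ =>
    isClosed_eq (Continuous.dist continuous_const continuous_id)
      (Metric.continuous_infDist_pt X)
end

section
/- Let X ⊆ ℝⁿ be a nonempty closed set, a ∈ ℝⁿ, and m(x) the set of closest points of X to x. Then the weak preimage m^#(m(a)) := {x ∈ ℝⁿ : m(x) ∩ m(a) ≠ ∅} is a closed subset of ℝⁿ. -/
open Filter Topology

/-- the weak preimage `m^#(m(a))` is closed. -/
theorem stmt_12 (n : ℕ) (X : Set (EuclideanSpace ℝ (Fin n)))
    (hXne : X.Nonempty) (hXcl : IsClosed X)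
    (m : EuclideanSpace ℝ (Fin n) → Set (EuclideanSpace ℝ (Fin n)))
    (hm : ∀ x, m x = {y ∈ X | dist y x = Metric.infDist x X})
    (a : EuclideanSpace ℝ (Fin n)) :
    IsClosed {x : EuclideanSpace ℝ (Fin n) | (m x ∩ m a).Nonempty} := by
  have hma_closed : IsClosed (m a) := by
    rw [hm]
    exact hXcl.inter (isClosed_eq (continuous_id.dist continuous_const) continuous_const)
  have hma_cpt : IsCompact (m a) := by
    refine (isCompact_closedBall a (Metric.infDist a X)).of_isClosed_subset hma_closed ?_
    intro y hy
    rw [hm] at hy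
    exact Metric.mem_closedBall.2 (le_of_eq hy.2)
  rw [← isSeqClosed_iff_isClosed]
  intro u x hu hux
  choose w hw using hu
  obtain ⟨L, hL, φ, hφ, hconv⟩ := hma_cpt.tendsto_subseq (fun k => (hw k).2)
  refine ⟨L, ?_, hL⟩
  rw [hm]
  have hLX : L ∈ X := by
    have := hL; rw [hm] at this; exact this.1
  refine ⟨hLX, ?_⟩
  have h1 : ∀ k, dist (w (φ k)) (u (φ k)) = Metric.infDist (u (φ k)) X := by
    intro k
    have := (hw (φ k)).1; rw [hm] at this; exact this.2
  have huφ : Tendsto (fun k => u (φ k)) atTop (𝓝 x) := hux.comp hφ.tendsto_atTop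
  have hd : Tendsto (fun k => dist (w (φ k)) (u (φ k))) atTop (𝓝 (dist L x)) :=
    hconv.dist huφ
  have hi : Tendsto (fun k => Metric.infDist (u (φ k)) X) atTop (𝓝 (Metric.infDist x X)) :=
    (Metric.continuous_infDist_pt X).continuousAt.tendsto.comp huφ
  have := tendsto_nhds_unique (hd.congr (fun k => h1 k)) hi
  exact this
end

section
/- Let X = {(0,0)} ∪ {(x, −(x−1)²) : x ∈ [1/2, 1]} ⊆ ℝ², and let N(p) = {y ∈ ℝ² : ‖y − p‖ = d(y,X)} for p ∈ X. Then there exists a sequence of points pᵥ ∈ X \ {(1,0)} with pᵥ → (1,0) such that N(pᵥ) ∩ N((0,0)) ≠ ∅ for all ν, while N((1,0)) ∩ N((0,0)) = ∅. In particular the weak preimage N^#(N((0,0))) = {p ∈ X : N(p) ∩ N((0,0)) ≠ ∅} is not closed in X. -/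
open Filter Topology

lemma le_infDist_aux {s : Set (EuclideanSpace ℝ (Fin 2))} {x : EuclideanSpace ℝ (Fin 2)}
    {c : ℝ} (hne : s.Nonempty) (h : ∀ z ∈ s, c ≤ dist x z) : c ≤ Metric.infDist x s :=
  le_of_not_gt fun hlt => by
    obtain ⟨z, hz, hd⟩ := (Metric.infDist_lt_iff hne).1 hlt
    exact absurd (h z hz) (not_le.2 hd)

lemma dist_formula (y : EuclideanSpace ℝ (Fin 2)) (c d : ℝ) :
    dist y !₂[c, d] = Real.sqrt ((y 0 - c)^2 + (y 1 - d)^2) := by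
  rw [EuclideanSpace.dist_eq, Fin.sum_univ_two]
  simp [Real.dist_eq, sq_abs]

lemma dist_le_of_sq (y : EuclideanSpace ℝ (Fin 2)) (c d c' d' : ℝ)
    (h : (y 0 - c)^2 + (y 1 - d)^2 ≤ (y 0 - c')^2 + (y 1 - d')^2) :
    dist y !₂[c, d] ≤ dist y !₂[c', d'] := by
  rw [dist_formula, dist_formula]
  exact Real.sqrt_le_sqrt h

lemma dist_eq_of_sq (y : EuclideanSpace ℝ (Fin 2)) (c d c' d' : ℝ)
    (h : (y 0 - c)^2 + (y 1 - d)^2 = (y 0 - c')^2 + (y 1 - d')^2) :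
    dist y !₂[c, d] = dist y !₂[c', d'] := by
  rw [dist_formula, dist_formula, h]

lemma master (X : Set (EuclideanSpace ℝ (Fin 2)))
    (hX : X = {(!₂[0, 0] : EuclideanSpace ℝ (Fin 2))} ∪
      {q : EuclideanSpace ℝ (Fin 2) | ∃ x ∈ Set.Icc (1/2 : ℝ) 1,
        q = !₂[x, -(x - 1)^2]})
    (e : ℝ) (he0 : 0 < e) (he : e ≤ 1/2) :
    ∃ y : EuclideanSpace ℝ (Fin 2),
      dist y !₂[1 - e, -e^2] = Metric.infDist y X ∧
      dist y !₂[0, 0] = Metric.infDist y X := by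
  set T : ℝ := (1 - 4*e^3 + 3*e^4) / (e*(2-e)) with hTdef
  have hden : (0:ℝ) < e*(2-e) := by nlinarith
  have hT : T * (e*(2-e)) = 1 - 4*e^3 + 3*e^4 := div_mul_cancel₀ _ hden.ne'
  have hcube : e^3 ≤ (1/2:ℝ)^3 := pow_le_pow_left₀ he0.le he 3
  have hTpos : 0 < T := div_pos (by nlinarith [pow_nonneg he0.le 4]) hden
  set a : ℝ := 1 - e*T - 2*e^3 with hadef
  set t : ℝ := (T - 1)/2 with htdef
  -- key algebraic identity
  have keyF : ∀ u : ℝ, ((a - u)^2 + (t + (u-1)^2)^2) - (a^2 + t^2)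
      = ((1-u) - e)^2 * (T + (1-u)^2 + 2*e*(1-u) + 3*e^2) := by
    intro u
    rw [hadef, htdef]
    linear_combination hT
  clear_value T
  have hadef' : a = 1 - e*T - 2*e^3 := hadef
  have htdef' : t = (T - 1)/2 := htdef
  clear_value a t
  let y : EuclideanSpace ℝ (Fin 2) := !₂[a, t]
  have hy0 : y 0 = a := rfl
  have hy1 : y 1 = t := rfl
  have h0X : (!₂[0,0] : EuclideanSpace ℝ (Fin 2)) ∈ X := by
    rw [hX]; exact Or.inl rfl
  have hne : X.Nonempty := ⟨_, h0X⟩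
  -- distance from y to origin and to p coincide
  have heqp : dist y !₂[1 - e, -e^2]
      = dist y !₂[0, 0] := by
    apply dist_eq_of_sq
    rw [hy0, hy1]
    linear_combination keyF (1 - e)
  -- y is at least as close to origin as to any point of X
  have hleall : ∀ z ∈ X, dist y !₂[0, 0] ≤
      dist y z := by
    rw [hX]
    rintro z (rfl | ⟨u, ⟨hu1, hu2⟩, rfl⟩)
    · exact le_rfl
    · apply dist_le_of_sq
      rw [hy0, hy1]
      have hid := keyF u
      have hfac : 0 ≤ ((1-u) - e)^2 * (T + (1-u)^2 + 2*e*(1-u) + 3*e^2) := by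
        apply mul_nonneg (sq_nonneg _)
        have h1 : 0 ≤ 2*e*(1-u) := by nlinarith
        nlinarith [sq_nonneg (1-u), sq_nonneg e]
      linarith [hid, hfac]
  have hinf : Metric.infDist y X
      = dist y !₂[0, 0] :=
    le_antisymm (Metric.infDist_le_dist_of_mem h0X) (le_infDist_aux hne hleall)
  exact ⟨y, by rw [heqp, hinf], by rw [hinf]⟩

set_option maxHeartbeats 1000000 in
lemma part2_lemma (X : Set (EuclideanSpace ℝ (Fin 2)))
    (hX : X = {(!₂[0, 0] : EuclideanSpace ℝ (Fin 2))} ∪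
      {q : EuclideanSpace ℝ (Fin 2) | ∃ x ∈ Set.Icc (1/2 : ℝ) 1,
        q = !₂[x, -(x - 1)^2]})
    (N : EuclideanSpace ℝ (Fin 2) → Set (EuclideanSpace ℝ (Fin 2)))
    (hN : ∀ p, N p = {y : EuclideanSpace ℝ (Fin 2) |
      dist y p = Metric.infDist y X}) :
    N !₂[1, 0] ∩ N !₂[0, 0] = ∅ := by
    rw [Set.eq_empty_iff_forall_notMem]
    intro y hy
    obtain ⟨h1, h0⟩ := hy
    simp only [hN, Set.mem_setOf_eq] at h1 h0
    have hdd : dist y (!₂[1, 0] : EuclideanSpace ℝ (Fin 2)) = dist y !₂[0, 0] :=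
      h1.trans h0.symm
    rw [dist_formula, dist_formula] at hdd
    have hS1 : (0:ℝ) ≤ (y 0 - 1)^2 + (y 1 - 0)^2 := by positivity
    have hsq : (y 0 - 1)^2 + (y 1 - 0)^2 = (y 0 - 0)^2 + (y 1 - 0)^2 := by
      rw [← Real.sq_sqrt hS1,
        ← Real.sq_sqrt (by positivity : (0:ℝ) ≤ (y 0 - 0)^2 + (y 1 - 0)^2), hdd]
    have ha : y 0 = 1/2 := by nlinarith [hsq]
    set t : ℝ := y 1 with ht
    clear_value t
    set ε : ℝ := (8 * (1 + |t|))⁻¹ with hε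
    have habs : (0:ℝ) ≤ |t| := abs_nonneg t
    have hd8 : (0:ℝ) < 8 * (1 + |t|) := by positivity
    have hε0 : 0 < ε := by positivity
    have hεe : ε * (8 * (1 + |t|)) = 1 := inv_mul_cancel₀ hd8.ne'
    have hεkeep := hε
    have hε8 : ε ≤ 1/8 := by
      rw [hε]
      have : (8:ℝ) ≤ 8 * (1 + |t|) := by nlinarith
      calc (8 * (1 + |t|))⁻¹ ≤ (8:ℝ)⁻¹ := inv_anti₀ (by norm_num) this
        _ = 1/8 := by norm_num
    clear_value ε
    -- the competing point on the curve
    have hqX : (!₂[1 - ε, -((1 - ε) - 1)^2] : EuclideanSpace ℝ (Fin 2)) ∈ X := by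
      rw [hX]
      exact Or.inr ⟨1 - ε, ⟨by linarith, by linarith⟩, rfl⟩
    have hlt : dist y (!₂[1 - ε, -((1 - ε) - 1)^2] : EuclideanSpace ℝ (Fin 2)) <
        dist y !₂[0, 0] := by
      rw [dist_formula, dist_formula]
      apply Real.sqrt_lt_sqrt (by positivity)
      have htabs : -|t| ≤ t := neg_abs_le t
      have htabs' : t ≤ |t| := le_abs_self t
      rw [ha, ← ht]
      have key1 : 2 * t * ε^2 ≤ 2 * (abs t) * ε^2 := by
        have h'' := mul_nonneg (sub_nonneg.2 htabs') (sq_nonneg ε)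
        nlinarith [h'']
      have key2 : (abs t) * ε = 1/8 - ε := by linear_combination hεe / 8
      have key3 : 2 * (abs t) * ε^2 = 2*ε*(1/8 - ε) := by
        linear_combination (2*ε) * key2
      have hε3 : ε^3 ≤ (1/8:ℝ)^3 := pow_le_pow_left₀ hε0.le hε8 3
      have hε4 : ε^4 ≤ ε * (1/512) := by nlinarith [hε3, hε0]
      nlinarith [key1, key3, hε4, hε0]
    have hinfle : Metric.infDist y X ≤
        dist y (!₂[1 - ε, -((1 - ε) - 1)^2] : EuclideanSpace ℝ (Fin 2)) :=
      Metric.infDist_le_dist_of_mem hqX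
    linarith [hinfle, hlt, h0.le, h0.ge]


set_option maxHeartbeats 1000000 in
/-- counterexample: the weak preimage of `N` need not be closed
in dimension two. -/
theorem stmt_17 (X : Set (EuclideanSpace ℝ (Fin 2)))
    (hX : X = {(!₂[0, 0] : EuclideanSpace ℝ (Fin 2))} ∪
      {q : EuclideanSpace ℝ (Fin 2) | ∃ x ∈ Set.Icc (1/2 : ℝ) 1,
        q = !₂[x, -(x - 1)^2]})
    (N : EuclideanSpace ℝ (Fin 2) → Set (EuclideanSpace ℝ (Fin 2)))
    (hN : ∀ p, N p = {y : EuclideanSpace ℝ (Fin 2) |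
      dist y p = Metric.infDist y X}) :
    (∃ p : ℕ → EuclideanSpace ℝ (Fin 2),
      (∀ ν, p ν ∈ X \ {(!₂[1, 0] : EuclideanSpace ℝ (Fin 2))}) ∧
      Tendsto p atTop (𝓝 (!₂[1, 0] : EuclideanSpace ℝ (Fin 2))) ∧
      (∀ ν, (N (p ν) ∩ N !₂[0, 0]).Nonempty)) ∧
    N !₂[1, 0] ∩ N !₂[0, 0] = ∅ ∧
    ¬ IsClosed {p : EuclideanSpace ℝ (Fin 2) |
      p ∈ X ∧ (N p ∩ N !₂[0, 0]).Nonempty} := by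
  -- the sequence parameter
  set ee : ℕ → ℝ := fun ν => ((ν : ℝ) + 4)⁻¹ with hee
  have hee0 : ∀ ν, 0 < ee ν := fun ν => by positivity
  have hee2 : ∀ ν, ee ν ≤ 1/2 := by
    intro ν
    rw [hee]
    have h4 : (4:ℝ) ≤ (ν:ℝ) + 4 := by
      have := Nat.cast_nonneg (α := ℝ) ν
      linarith
    calc ((ν : ℝ) + 4)⁻¹ ≤ (4:ℝ)⁻¹ := by
          apply inv_anti₀ (by norm_num) h4
      _ ≤ 1/2 := by norm_num
  set p : ℕ → EuclideanSpace ℝ (Fin 2) := fun ν => !₂[1 - ee ν, -(ee ν)^2] with hp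
  -- Part 1
  have part1mem : ∀ ν, p ν ∈ X \ {(!₂[1, 0] : EuclideanSpace ℝ (Fin 2))} := by
    intro ν
    constructor
    · rw [hX]
      refine Or.inr ⟨1 - ee ν, ⟨by linarith [hee2 ν], by linarith [hee0 ν]⟩, ?_⟩
      have h : -((1 - ee ν) - 1)^2 = -(ee ν)^2 := by ring
      rw [h]
    · intro hmem
      have h0 := congrArg (fun v : EuclideanSpace ℝ (Fin 2) => v 0) hmem
      simp only [hp] at h0
      have : (1 : ℝ) - ee ν = 1 := h0
      linarith [hee0 ν]
  have part1tend : Tendsto p atTop (𝓝 (!₂[1, 0] : EuclideanSpace ℝ (Fin 2))) := by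
    rw [tendsto_iff_dist_tendsto_zero]
    have hbound : ∀ ν, dist (p ν) (!₂[1, 0] : EuclideanSpace ℝ (Fin 2)) ≤ 2 * ee ν := by
      intro ν
      rw [dist_formula]
      have h0 : (p ν) 0 = 1 - ee ν := rfl
      have h1 : (p ν) 1 = -(ee ν)^2 := rfl
      rw [h0, h1]
      have hle : ((1 - ee ν) - 1)^2 + (-(ee ν)^2 - 0)^2 ≤ (2 * ee ν)^2 := by
        have he2 : (ee ν)^2 ≤ 1/4 := by nlinarith [hee0 ν, hee2 ν]
        nlinarith [sq_nonneg (ee ν), he2]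
      calc Real.sqrt (((1 - ee ν) - 1)^2 + (-(ee ν)^2 - 0)^2)
          ≤ Real.sqrt ((2 * ee ν)^2) := Real.sqrt_le_sqrt hle
        _ = 2 * ee ν := Real.sqrt_sq (by linarith [hee0 ν])
    have htend : Tendsto (fun ν => 2 * ee ν) atTop (𝓝 0) := by
      have h1 : Tendsto (fun ν : ℕ => ((ν : ℝ) + 4)) atTop atTop :=
        tendsto_atTop_add_const_right _ 4 tendsto_natCast_atTop_atTop
      have h2 : Tendsto ee atTop (𝓝 0) := h1.inv_tendsto_atTop
      simpa using h2.const_mul 2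
    exact squeeze_zero (fun ν => dist_nonneg) hbound htend
  have part1inter : ∀ ν, (N (p ν) ∩ N !₂[0, 0]).Nonempty := by
    intro ν
    obtain ⟨y, hy1, hy2⟩ := master X hX (ee ν) (hee0 ν) (hee2 ν)
    exact ⟨y, by rw [hN]; exact hy1, by rw [hN]; exact hy2⟩
  have part2 : N !₂[1, 0] ∩ N !₂[0, 0] = ∅ := part2_lemma X hX N hN
  refine ⟨⟨p, part1mem, part1tend, part1inter⟩, part2, ?_⟩
  -- Part 3
  intro hcl
  have hmemS : ∀ ν, p ν ∈ {q : EuclideanSpace ℝ (Fin 2) |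
      q ∈ X ∧ (N q ∩ N !₂[0, 0]).Nonempty} := fun ν => ⟨(part1mem ν).1, part1inter ν⟩
  have hlim := hcl.mem_of_tendsto part1tend (Filter.Eventually.of_forall hmemS)
  obtain ⟨-, hne'⟩ := hlim
  rw [part2] at hne'
  exact Set.not_nonempty_empty hne'
end

section
/- Let X ⊆ ℝ be a nonempty closed set, a ∈ X, and N(x) = {t ∈ ℝ : |t − x| = d(t, X)} for x ∈ X. If (xₙ) ⊆ X is a sequence with N(a) ∩ N(xₙ) ≠ ∅ for all n and xₙ → x₀ for some x₀ ∈ ℝ, then x₀ ∈ X and N(a) ∩ N(x₀) ≠ ∅. In other words, in dimension one the weak preimage N^#(N(a)) is closed in X. -/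
open Filter Topology

/-- in dimension one the weak preimage `N^#(N(a))` is closed. -/
theorem stmt_18 (X : Set ℝ) (hXne : X.Nonempty) (hXcl : IsClosed X)
    (a : ℝ) (ha : a ∈ X)
    (N : ℝ → Set ℝ)
    (hN : ∀ x, N x = {t : ℝ | |t - x| = Metric.infDist t X})
    (x : ℕ → ℝ) (hxX : ∀ k, x k ∈ X)
    (hmeet : ∀ k, (N a ∩ N (x k)).Nonempty)
    (x₀ : ℝ) (hx : Tendsto x atTop (𝓝 x₀)) :
    x₀ ∈ X ∧ (N a ∩ N x₀).Nonempty := by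
  have hx₀X : x₀ ∈ X := hXcl.mem_of_tendsto hx (Filter.Eventually.of_forall hxX)
  refine ⟨hx₀X, ?_⟩
  have hdist_a : Metric.infDist a X = 0 := Metric.infDist_zero_of_mem ha
  by_cases hne : x₀ = a
  · refine ⟨a, ?_, ?_⟩
    · rw [hN]; simp [hdist_a]
    · rw [hN, hne]; simp [hdist_a]
  -- x₀ ≠ a: eventually x k ≠ a, and the common point is the midpoint
  have hev : ∀ᶠ k in atTop, x k ≠ a := hx (isOpen_ne.mem_nhds hne)
  set t₀ : ℝ := (a + x₀) / 2 with ht₀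
  have hmid : ∀ᶠ k in atTop,
      |(a + x k) / 2 - a| = Metric.infDist ((a + x k) / 2) X := by
    filter_upwards [hev] with k hk
    obtain ⟨t, hta, htx⟩ := hmeet k
    rw [hN] at hta htx
    have h1 : |t - a| = Metric.infDist t X := hta
    have h2 : |t - x k| = Metric.infDist t X := htx
    have h3 : |t - a| = |t - x k| := by rw [h1, h2]
    rcases abs_eq_abs.mp h3 with h | h
    · exact absurd (by linarith) hk
    · have ht : t = (a + x k) / 2 := by linarith
      rw [← ht]; exact h1
  -- take limits
  have htend : Tendsto (fun k => (a + x k) / 2) atTop (𝓝 t₀) := by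
    exact (tendsto_const_nhds.add hx).div_const 2
  have hcont : Tendsto
      (fun k => |(a + x k) / 2 - a| - Metric.infDist ((a + x k) / 2) X) atTop
      (𝓝 (|t₀ - a| - Metric.infDist t₀ X)) := by
    exact ((continuous_abs.comp (continuous_id.sub continuous_const)).tendsto _).comp htend
      |>.sub (((Metric.continuous_infDist_pt X).tendsto _).comp htend)
  have hzero : Tendsto
      (fun k => |(a + x k) / 2 - a| - Metric.infDist ((a + x k) / 2) X) atTop (𝓝 0) :=
    tendsto_const_nhds.congr' (by filter_upwards [hmid] with k hk; rw [hk, sub_self])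
  have hkey : |t₀ - a| - Metric.infDist t₀ X = 0 := tendsto_nhds_unique hcont hzero
  have h1 : |t₀ - a| = Metric.infDist t₀ X := by linarith
  refine ⟨t₀, ?_, ?_⟩
  · rw [hN]; exact h1
  · rw [hN]
    have h2 : t₀ - x₀ = -(t₀ - a) := by rw [ht₀]; ring
    show |t₀ - x₀| = _
    rw [h2, abs_neg]; exact h1
end
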